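/- Let a_1 ≥ ... ≥ a_n > 0 with sum S and let m ≤ n. If a_1 - a_n ≤ S/m, then there exists an allocation of the objects to m bins, each object split across at most 2 bins with fraction values depending only on (bin, stage), such that every bin receives total size exactly S/m. -/

import Mathlib

lemma order_lemma {α : Type*} [DecidableEq α] (d : α → ℝ) (u v : ℝ) (hu : 0 ≤ u) (hv : 0 ≤ v) :
    ∀ N (l : List α), l.length ≤ N → (∀ x ∈ l, -u ≤ d x ∧ d x ≤ v) →
    ∀ P : ℝ, -u ≤ P → P ≤ v → P + (l.map d).sum = 0 →
    ∃ l' : List α, l.Perm l' ∧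
      ∀ k : ℕ, -u ≤ P + ((l'.take k).map d).sum ∧ P + ((l'.take k).map d).sum ≤ v := by
  intro N
  induction N with
  | zero =>
    intro l hlen _ P hP1 hP2 _
    have hl : l = [] := List.eq_nil_of_length_eq_zero (Nat.le_zero.mp hlen)
    subst hl
    exact ⟨[], List.Perm.refl _, fun k => by simp [hP1, hP2]⟩
  | succ N ih =>
    intro l hlen hmem P hP1 hP2 hsum
    by_cases hlne : l = []
    · subst hlne; exact ⟨[], List.Perm.refl _, fun k => by simp [hP1, hP2]⟩
    have key : ∃ x ∈ l, (0 ≤ P ∧ d x ≤ 0) ∨ (P < 0 ∧ 0 < d x) := by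
      by_cases hP : 0 ≤ P
      · by_contra hcon
        push_neg at hcon
        have hpos : ∀ z ∈ l.map d, 0 < z := by
          intro z hz
          obtain ⟨x, hx, rfl⟩ := List.mem_map.mp hz
          exact (hcon x hx).1 hP
        have := List.sum_pos _ hpos (by simpa using hlne)
        linarith
      · push_neg at hP
        by_contra hcon
        push_neg at hcon
        have hnp : ∀ z ∈ l.map d, z ≤ (0:ℝ) := by
          intro z hz
          obtain ⟨x, hx, rfl⟩ := List.mem_map.mp hz
          exact (hcon x hx).2 hP
        have h0 : (l.map d).sum ≤ 0 := by
          have := List.sum_le_card_nsmul (l.map d) 0 hnp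
          simpa using this
        linarith
    obtain ⟨x, hx, hcase⟩ := key
    have hperm1 : l.Perm (x :: l.erase x) := List.perm_cons_erase hx
    have hlen' : (l.erase x).length ≤ N := by
      have h1 := List.length_erase_of_mem hx
      have h2 : 0 < l.length := List.length_pos_iff.mpr hlne
      omega
    have hmem' : ∀ z ∈ l.erase x, -u ≤ d z ∧ d z ≤ v :=
      fun z hz => hmem z (List.erase_subset hz)
    have hsum' : (P + d x) + ((l.erase x).map d).sum = 0 := by
      have : (l.map d).sum = d x + ((l.erase x).map d).sum := by
        have := hperm1.map d
        have := this.sum_eq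
        simpa using this
      linarith
    have hPx1 : -u ≤ P + d x := by
      rcases hcase with ⟨h1, h2⟩ | ⟨h1, h2⟩
      · have := (hmem x hx).1; linarith
      · linarith
    have hPx2 : P + d x ≤ v := by
      rcases hcase with ⟨h1, h2⟩ | ⟨h1, h2⟩
      · linarith
      · have := (hmem x hx).2; linarith
    obtain ⟨l'', hperm'', hpre⟩ := ih (l.erase x) hlen' hmem' (P + d x) hPx1 hPx2 hsum'
    refine ⟨x :: l'', hperm1.trans (hperm''.cons x), ?_⟩
    intro k
    cases k with
    | zero => simpa using ⟨hP1, hP2⟩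
    | succ k =>
      have := hpre k
      simpa [add_assoc] using this

noncomputable def argm {m : ℕ} (hm : 0 < m) (f : Fin m → ℝ) : Fin m :=
  (@Finite.exists_min (Fin m) ℝ _ ⟨⟨0, hm⟩⟩ _ f).choose

lemma argm_le {m : ℕ} (hm : 0 < m) (f : Fin m → ℝ) (b : Fin m) : f (argm hm f) ≤ f b :=
  (@Finite.exists_min (Fin m) ℝ _ ⟨⟨0, hm⟩⟩ _ f).choose_spec b

noncomputable def gLoads {m : ℕ} (hm : 0 < m) (sz : ℕ → ℝ) : ℕ → Fin m → ℝ
  | 0 => fun _ => 0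
  | (t+1) => fun b =>
      gLoads hm sz t b + (if b = argm hm (gLoads hm sz t) then sz t else 0)

lemma gLoads_eq_sum {m : ℕ} (hm : 0 < m) (sz : ℕ → ℝ) (t : ℕ) (b : Fin m) :
    gLoads hm sz t b =
      ∑ i ∈ Finset.range t, (if argm hm (gLoads hm sz i) = b then sz i else 0) := by
  induction t with
  | zero => simp [gLoads]
  | succ t ih =>
    rw [Finset.sum_range_succ, ← ih]
    simp [gLoads, eq_comm]

lemma greedy_partition (n m : ℕ) (hn : 0 < n) (hm : 0 < m) (hmn : m ≤ n)
    (a : Fin n → ℝ) (ha_pos : ∀ i, 0 < a i) (ha_sorted : Antitone a)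
    (hgap : a ⟨0, hn⟩ - a ⟨n - 1, Nat.sub_lt hn Nat.one_pos⟩ ≤ (∑ i, a i) / m) :
    ∃ g : Fin n → Fin m,
      (∀ b, 0 < ∑ i ∈ Finset.univ.filter (fun i => g i = b), a i) ∧
      (∀ b b', (∑ i ∈ Finset.univ.filter (fun i => g i = b), a i) ≤
        (∑ i ∈ Finset.univ.filter (fun i => g i = b'), a i) + (∑ i, a i) / m) := by
  classical
  set S : ℝ := ∑ i, a i with hS
  set c : ℝ := S / m with hc
  set sz : ℕ → ℝ := fun i => if h : i < n then a ⟨i, h⟩ else 0 with hsz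
  set L : ℕ → Fin m → ℝ := gLoads hm sz with hLdef
  set asg : ℕ → Fin m := fun t => argm hm (L t) with hasg
  set g : Fin n → Fin m := fun i => asg i.val with hg
  have hsz_nonneg : ∀ i, 0 ≤ sz i := by
    intro i; simp only [hsz]; split
    · exact (ha_pos _).le
    · exact le_refl 0
  have hstep : ∀ t b, L (t+1) b = L t b + (if b = asg t then sz t else 0) := by
    intro t b; rfl
  have hmono : ∀ t t' b, t ≤ t' → L t b ≤ L t' b := by
    intro t t' b h
    simp only [hLdef, gLoads_eq_sum]
    apply Finset.sum_le_sum_of_subset_of_nonneg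
    · exact Finset.range_subset_range.mpr h
    · intro i _ _; split
      · exact hsz_nonneg i
      · exact le_refl 0
  have hnonneg : ∀ t b, 0 ≤ L t b := by
    intro t b
    simp only [hLdef, gLoads_eq_sum]
    apply Finset.sum_nonneg
    intro i _; split
    · exact hsz_nonneg i
    · exact le_refl 0
  have hminmono : ∀ t, L t (asg t) ≤ L (t+1) (asg (t+1)) := by
    intro t
    calc L t (asg t) ≤ L t (asg (t+1)) := argm_le hm (L t) _
    _ ≤ L (t+1) (asg (t+1)) := hmono t (t+1) _ (Nat.le_succ t)
  -- few nonzero bins early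
  have hcount : ∀ t, (Finset.univ.filter (fun b => L t b ≠ 0)).card ≤ t := by
    intro t
    induction t with
    | zero => simp [hLdef, gLoads]
    | succ t ih =>
      have hsub : (Finset.univ.filter (fun b => L (t+1) b ≠ 0)) ⊆
          insert (asg t) (Finset.univ.filter (fun b => L t b ≠ 0)) := by
        intro b hb
        simp only [Finset.mem_filter, Finset.mem_univ, true_and] at hb
        by_cases hbe : b = asg t
        · simp [hbe]
        · rw [hstep t b, if_neg hbe, add_zero] at hb
          simp [hb]
      calc (Finset.univ.filter (fun b => L (t+1) b ≠ 0)).card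
          ≤ _ := Finset.card_le_card hsub
        _ ≤ (Finset.univ.filter (fun b => L t b ≠ 0)).card + 1 := Finset.card_insert_le _ _
        _ ≤ t + 1 := by omega
  have hminzero : ∀ t, t < m → L t (asg t) = 0 := by
    intro t ht
    have hex : ∃ b, L t b = 0 := by
      by_contra hcon
      push_neg at hcon
      have : (Finset.univ.filter (fun b => L t b ≠ 0)).card = m := by
        rw [Finset.filter_true_of_mem (fun b _ => hcon b)]
        simp
      have := hcount t
      omega
    obtain ⟨b0, hb0⟩ := hex
    have h1 := argm_le hm (L t) b0
    have h2 := hnonneg t (asg t)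
    rw [hb0] at h1
    linarith
  have hszlt : ∀ t (h : t < n), sz t = a ⟨t, h⟩ := by
    intro t h; simp only [hsz, dif_pos h]
  have hzerocount : ∀ t, t ≤ m → (Finset.univ.filter (fun b => L t b = 0)).card ≤ m - t := by
    intro t
    induction t with
    | zero => intro _; simpa using Finset.card_filter_le Finset.univ (fun b => L 0 b = 0)
    | succ t ih =>
      intro ht
      have ht' : t < m := ht
      have hsub : (Finset.univ.filter (fun b => L (t+1) b = 0)) ⊆
          (Finset.univ.filter (fun b => L t b = 0)).erase (asg t) := by
        intro b hb
        simp only [Finset.mem_filter, Finset.mem_univ, true_and] at hb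
        have hbt : L t b = 0 := le_antisymm (by rw [← hb]; exact hmono t (t+1) b (Nat.le_succ t)) (hnonneg t b)
        have hbne : b ≠ asg t := by
          intro hbe
          rw [hbe, hstep t (asg t), if_pos rfl, hminzero t ht', zero_add,
            hszlt t (lt_of_lt_of_le ht' hmn)] at hb
          exact absurd hb (ne_of_gt (ha_pos _))
        exact Finset.mem_erase.mpr ⟨hbne, by simp [hbt]⟩
      have hmem : asg t ∈ Finset.univ.filter (fun b => L t b = 0) := by
        simp [hminzero t ht']
      calc (Finset.univ.filter (fun b => L (t+1) b = 0)).card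
          ≤ _ := Finset.card_le_card hsub
        _ = (Finset.univ.filter (fun b => L t b = 0)).card - 1 := Finset.card_erase_of_mem hmem
        _ ≤ m - t - 1 := by have := ih ht'.le; omega
        _ ≤ m - (t+1) := by omega
  have hallpos : ∀ b, 0 < L m b := by
    intro b
    have h0 := hzerocount m le_rfl
    simp only [Nat.sub_self] at h0
    have : Finset.univ.filter (fun b => L m b = 0) = ∅ := Finset.card_eq_zero.mp (Nat.le_zero.mp h0)
    have hb : L m b ≠ 0 := by
      intro hbe
      have : b ∈ Finset.univ.filter (fun b => L m b = 0) := by simp [hbe]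
      simp_all
    exact lt_of_le_of_ne (hnonneg m b) (Ne.symm hb)
  -- basic size facts
  set a0 : ℝ := a ⟨0, hn⟩ with ha0def
  set amin : ℝ := a ⟨n - 1, Nat.sub_lt hn Nat.one_pos⟩ with hamindef
  have hamin_le : ∀ i, amin ≤ a i := by
    intro i
    apply ha_sorted
    rw [Fin.le_def]
    simp only []
    omega
  have ha0_ge : ∀ i, a i ≤ a0 := by
    intro i
    apply ha_sorted
    rw [Fin.le_def]
    simp only []
    omega
  have hSpos : 0 < S := Finset.sum_pos (fun i _ => ha_pos i) ⟨⟨0, hn⟩, Finset.mem_univ _⟩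
  have hcpos : 0 < c := div_pos hSpos (by exact_mod_cast hm)
  set A : ℝ := sz m with hAdef
  have hA0 : 0 ≤ A := hsz_nonneg m
  have hszA : ∀ t, m ≤ t → sz t ≤ A := by
    intro t ht
    by_cases htn : t < n
    · have hmn' : m < n := lt_of_le_of_lt ht htn
      rw [hszlt t htn, hAdef, hszlt m hmn']
      apply ha_sorted
      rw [Fin.le_def]
      exact ht
    · simp only [hsz]
      rw [dif_neg htn]
      exact hA0
  have hAc : A ≤ c := by
    by_cases hmn' : m < n
    · rw [hAdef, hszlt m hmn']
      set am : ℝ := a ⟨m, hmn'⟩ with hamdef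
      have h1 : (m + 1) • am ≤ ∑ i ∈ (Finset.range (m+1)).attachFin
          (fun k hk => lt_of_lt_of_le (Finset.mem_range.mp hk) hmn'), a i := by
        have := Finset.card_nsmul_le_sum ((Finset.range (m+1)).attachFin
          (fun k hk => lt_of_lt_of_le (Finset.mem_range.mp hk) hmn')) a am ?_
        · simpa [Finset.card_attachFin] using this
        · intro i hi
          apply ha_sorted
          rw [Fin.le_def]
          have h4 := (Finset.mem_attachFin _).mp hi
          simp only [Finset.mem_range] at h4
          show (i : ℕ) ≤ m
          omega
      have h2 : (∑ i ∈ (Finset.range (m+1)).attachFin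
          (fun k hk => lt_of_lt_of_le (Finset.mem_range.mp hk) hmn'), a i) ≤ S := by
        apply Finset.sum_le_sum_of_subset_of_nonneg (Finset.subset_univ _)
        intro i _ _
        exact (ha_pos i).le
      have hampos : 0 < am := ha_pos _
      rw [hc, le_div_iff₀ (by exact_mod_cast hm : (0:ℝ) < m)]
      have h3 : ((m:ℝ) + 1) * am ≤ S := by
        calc ((m:ℝ) + 1) * am = ((m+1) : ℕ) • am := by push_cast [nsmul_eq_mul]; ring
        _ ≤ _ := h1
        _ ≤ S := h2
      nlinarith
    · have : ¬ (m < n) := hmn'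
      simp only [hAdef, hsz]
      rw [dif_neg this]
      exact hcpos.le
  have ha0pos : 0 < a0 := ha_pos _
  -- main invariant
  have hinv : ∀ t b, L t b ≤ a0 ∨ L t b ≤ L t (asg t) + A := by
    intro t
    induction t with
    | zero =>
      intro b
      left
      have : L 0 b = 0 := rfl
      rw [this]
      exact ha0pos.le
    | succ t ih =>
      intro b
      by_cases hbe : b = asg t
      · subst hbe
        rw [hstep t (asg t), if_pos rfl]
        by_cases htm : t < m
        · left
          rw [hminzero t htm, zero_add]
          have htn : t < n := lt_of_lt_of_le htm hmn
          rw [hszlt t htn]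
          exact ha0_ge _
        · right
          push_neg at htm
          have := hminmono t
          have := hszA t htm
          linarith
      · rw [hstep t b, if_neg hbe, add_zero]
        rcases ih b with h | h
        · left; exact h
        · right
          have := hminmono t
          linarith
  -- fiber sums equal final loads
  have hLfiber : ∀ b, (∑ i ∈ Finset.univ.filter (fun i => g i = b), a i) = L n b := by
    intro b
    rw [Finset.sum_filter, hLdef, gLoads_eq_sum,
      ← Fin.sum_univ_eq_sum_range (fun i => if argm hm (gLoads hm sz i) = b then sz i else 0) n]
    apply Finset.sum_congr rfl
    intro i _
    have hszi : sz i.val = a i := by rw [hszlt i.val i.isLt]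
    by_cases hcond : g i = b
    · rw [if_pos hcond, if_pos (by exact hcond), hszi]
    · rw [if_neg hcond, if_neg (by exact hcond)]
  have hfpos : ∀ b, 0 < L n b := fun b => lt_of_lt_of_le (hallpos b) (hmono m n b hmn)
  have hges : ∀ b, amin ≤ L n b := by
    intro b
    have hne : (Finset.univ.filter (fun i => g i = b)).Nonempty := by
      apply Finset.nonempty_of_sum_ne_zero (f := a)
      rw [hLfiber b]
      exact (hfpos b).ne'
    obtain ⟨i, hi⟩ := hne
    calc amin ≤ a i := hamin_le i
    _ ≤ _ := Finset.single_le_sum (fun j _ => (ha_pos j).le) hi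
    _ = L n b := hLfiber b
  refine ⟨g, ?_, ?_⟩
  · intro b
    rw [hLfiber b]
    exact hfpos b
  · intro b b'
    rw [hLfiber b, hLfiber b']
    rcases hinv n b with h | h
    · have h2 := hges b'
      linarith
    · have h2 := argm_le hm (L n) b'
      have := hAc
      linarith



/-- For objects `a 0 ≥ ... ≥ a (n-1) > 0` with sum `S` and `m ≤ n` bins, if
`a 0 - a (n-1) ≤ S/m` then the objects can be allocated to the `m` bins, each object
split across at most 2 bins, with fraction values depending only on (bin, stage), such
that every bin receives total size exactly `S/m`. -/
theorem balanced_two_stage_exact (n m : ℕ) (hn : 0 < n) (hm : 0 < m) (hmn : m ≤ n)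
    (a : Fin n → ℝ) (ha_pos : ∀ i, 0 < a i) (ha_sorted : Antitone a)
    (hgap : a ⟨0, hn⟩ - a ⟨n - 1, Nat.sub_lt hn Nat.one_pos⟩ ≤ (∑ i, a i) / m) :
    ∃ lam : Fin n → Fin m → ℝ,
      (∀ i j, lam i j ∈ Set.Icc (0 : ℝ) 1) ∧
      (∀ i, ∑ j, lam i j = 1) ∧
      (∀ i, ∃ s : Finset (Fin m), s.card ≤ 2 ∧ ∀ j ∉ s, lam i j = 0) ∧
      (∀ j, ∑ i, a i * lam i j = (∑ i, a i) / m) ∧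
      (∃ α : Fin m → Fin 2 → ℝ, ∀ i j, lam i j = 0 ∨ lam i j = α j 0 ∨ lam i j = α j 1) := by
  classical
  by_cases hm1 : m = 1
  · subst hm1
    refine ⟨fun _ _ => 1, fun i j => ⟨zero_le_one, le_rfl⟩, fun i => by simp, fun i => ⟨{0}, by simp, fun j hj => absurd (by simp [Fin.eq_zero j]) hj⟩, fun j => by simp, ⟨fun _ _ => 1, fun i j => Or.inr (Or.inl rfl)⟩⟩
  have hm2 : 2 ≤ m := by omega
  haveI : NeZero m := ⟨by omega⟩
  have hone : (1 : Fin m) ≠ 0 := by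
    intro h
    have := congrArg Fin.val h
    rw [Fin.val_one', Nat.mod_eq_of_lt (by omega)] at this
    simp at this
  obtain ⟨g, hgpos, hgbal⟩ := greedy_partition n m hn hm hmn a ha_pos ha_sorted hgap
  set S : ℝ := ∑ i, a i with hS
  set c : ℝ := S / m with hc
  have hSpos : 0 < S := Finset.sum_pos (fun i _ => ha_pos i) ⟨⟨0, hn⟩, Finset.mem_univ _⟩
  have hmR : (0:ℝ) < m := by exact_mod_cast hm
  have hcpos : 0 < c := div_pos hSpos hmR
  set Gf : Fin m → ℝ := fun b => ∑ i ∈ Finset.univ.filter (fun i => g i = b), a i with hGf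
  have hGsum : ∑ b, Gf b = S := by
    rw [hGf, hS]
    exact Finset.sum_fiberwise _ _ _
  have huniv : (Finset.univ : Finset (Fin m)).Nonempty := ⟨0, Finset.mem_univ _⟩
  set Gmin : ℝ := Finset.univ.inf' huniv Gf with hGmin
  set Gmax : ℝ := Finset.univ.sup' huniv Gf with hGmax
  have hGmin_le : ∀ b, Gmin ≤ Gf b := fun b => Finset.inf'_le _ (Finset.mem_univ b)
  have hGmax_ge : ∀ b, Gf b ≤ Gmax := fun b => Finset.le_sup' _ (Finset.mem_univ b)
  obtain ⟨bmin, -, hbmin⟩ := Finset.exists_mem_eq_inf' huniv Gf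
  obtain ⟨bmax, -, hbmax⟩ := Finset.exists_mem_eq_sup' huniv Gf
  have hGminc : Gmin ≤ c := by
    have h1 : (m : ℝ) * Gmin ≤ S := by
      calc (m:ℝ) * Gmin = ∑ _b : Fin m, Gmin := by
            simp [Finset.sum_const, nsmul_eq_mul]
      _ ≤ ∑ b, Gf b := Finset.sum_le_sum (fun b _ => hGmin_le b)
      _ = S := hGsum
    rw [hc, le_div_iff₀ hmR]
    linarith
  have hGmaxc : c ≤ Gmax := by
    have h1 : S ≤ (m : ℝ) * Gmax := by
      calc S = ∑ b, Gf b := hGsum.symm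
      _ ≤ ∑ _b : Fin m, Gmax := Finset.sum_le_sum (fun b _ => hGmax_ge b)
      _ = (m:ℝ) * Gmax := by simp [Finset.sum_const, nsmul_eq_mul]
    rw [hc, div_le_iff₀ hmR]
    linarith
  have hdelta : Gmax - Gmin ≤ c := by
    have h1 : Gf bmax ≤ Gf bmin + c := hgbal bmax bmin
    rw [← hbmax, ← hbmin] at h1
    linarith
  set u : ℝ := c - Gmin with hu
  set v : ℝ := Gmax - c with hv
  have hu0 : 0 ≤ u := by rw [hu]; linarith
  have hv0 : 0 ≤ v := by rw [hv]; linarith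
  set d : Fin m → ℝ := fun b => Gf b - c with hd
  have hdsum : ((List.finRange m).map d).sum = 0 := by
    have h1 : ((List.finRange m).map d).sum = ∑ b, d b := by
      rw [Fin.sum_univ_def]
    rw [h1, hd]
    simp only
    rw [Finset.sum_sub_distrib, hGsum]
    simp [Finset.sum_const, nsmul_eq_mul, hc]
    field_simp
    ring
  obtain ⟨l', hperm, hpre⟩ := order_lemma d u v hu0 hv0 m (List.finRange m)
    (by simp) (fun x _ => ⟨by have := hGmin_le x; simp only [hd, hu]; linarith,
      by have := hGmax_ge x; simp only [hd, hv]; linarith⟩)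
    0 (by linarith) (by linarith) (by rw [hdsum]; ring)
  have hlen : l'.length = m := by rw [← hperm.length_eq]; simp
  have hnodup : l'.Nodup := hperm.nodup (List.nodup_finRange m)
  set σf : Fin m → Fin m := fun k => l'.get (Fin.cast hlen.symm k) with hσf
  have hσinj : Function.Injective σf := by
    intro x y hxy
    have h1 := (List.nodup_iff_injective_get.mp hnodup) hxy
    have := congrArg Fin.val h1
    exact Fin.ext this
  have hσbij : Function.Bijective σf := Finite.injective_iff_bijective.mp hσinj
  set e : Fin m ≃ Fin m := Equiv.ofBijective σf hσbij with he
  set p : Fin n → Fin m := fun i => e.symm (g i) with hp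
  set F : Fin m → ℝ := fun q => Gf (σf q) with hF
  have hFpos : ∀ q, 0 < F q := fun q => hgpos (σf q)
  set Qn : ℕ → ℝ := fun j => ((l'.map d).take j).sum with hQn
  have hQmem : ∀ j, -u ≤ Qn j ∧ Qn j ≤ v := by
    intro j
    have h1 := hpre j
    simp only [zero_add, List.map_take] at h1
    exact h1
  have hlen' : l'.length = (l'.map d).length := by simp
  have hQstep : ∀ (k : Fin m), Qn (k.val + 1) = Qn k.val + d (σf k) := by
    intro k
    have hk : k.val < (l'.map d).length := by simp [hlen]
    have h1 := List.sum_take_succ (l'.map d) k.val hk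
    rw [hQn]
    simp only
    rw [h1]
    congr 1
    simp [hσf, List.getElem_map]
  have hQm : Qn m = 0 := by
    rw [hQn]
    simp only
    rw [List.take_of_length_le (by simp [hlen])]
    have h2 := (hperm.map d).sum_eq
    rw [← h2, hdsum]
  -- choose the base potential
  obtain ⟨js, hjs⟩ := Finite.exists_max (fun k : Fin m => -(Qn (k.val + 1)))
  set vstar : ℝ := -(Qn (js.val + 1)) with hvstar
  set uu : Fin m → ℝ := fun k => vstar + Qn (k.val + 1) with huu
  have huu0 : ∀ k, 0 ≤ uu k := by
    intro k
    have h1 := hjs k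
    rw [huu]
    simp only
    rw [hvstar] at h1 ⊢
    linarith
  have hFd : ∀ k, F k = d (σf k) + c := by
    intro k
    rw [hF, hd]
    simp only
    ring
  have huuG : ∀ k, uu k ≤ F k := by
    intro k
    have h1 := hQstep k
    have h2 := (hQmem k.val).2
    have h3 := (hQmem (js.val + 1)).1
    rw [huu, hvstar]
    simp only
    rw [hFd k, h1]
    have hvu : v + u ≤ c := by rw [hv, hu]; linarith
    linarith
  set t : Fin m → ℝ := fun k => uu k / F k with ht
  have ht0 : ∀ k, 0 ≤ t k := fun k => div_nonneg (huu0 k) (hFpos k).le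
  have ht1 : ∀ k, t k ≤ 1 := fun k => (div_le_one (hFpos k)).mpr (huuG k)
  have htF : ∀ k, t k * F k = uu k := by
    intro k
    rw [ht]
    simp only
    rw [div_mul_eq_mul_div, mul_div_assoc, div_self (hFpos k).ne', mul_one]
  have hvalsucc : ∀ j : Fin m, (j + 1 : Fin m).val = (j.val + 1) % m := by
    intro j
    rw [Fin.add_def]
    congr 1
    rw [Fin.val_one', Nat.mod_eq_of_lt (by omega : 1 < m)]
  have hkey : ∀ j : Fin m, t j * F j + (1 - t (j + 1)) * F (j + 1) = c := by
    intro j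
    rw [htF j]
    have h2 : (1 - t (j+1)) * F (j+1) = F (j+1) - uu (j+1) := by
      rw [sub_mul, one_mul, htF (j+1)]
    rw [h2]
    by_cases hw : j.val + 1 < m
    · have hval : (j + 1 : Fin m).val = j.val + 1 := by
        rw [hvalsucc j, Nat.mod_eq_of_lt hw]
      have hs := hQstep (j + 1)
      rw [hval] at hs
      have h3 : uu (j+1) = vstar + (Qn (j.val + 1) + d (σf (j+1))) := by
        rw [huu]
        simp only
        rw [hval, hs]
      rw [h3, hFd (j+1), huu]
      simp only
      ring
    · have hjl : j.val + 1 = m := by have := j.isLt; omega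
      have hval : (j + 1 : Fin m).val = 0 := by
        rw [hvalsucc j, hjl, Nat.mod_self]
      have hs := hQstep (j + 1)
      rw [hval] at hs
      have h3 : uu (j+1) = vstar + (Qn 0 + d (σf (j+1))) := by
        rw [huu]
        simp only
        rw [hval, hs]
      have h4 : uu j = vstar + Qn m := by rw [huu]; simp only; rw [hjl]
      have h5 : Qn 0 = 0 := by rw [hQn]; simp
      rw [h3, hFd (j+1), h4, hQm, h5]
      ring
  set lam : Fin n → Fin m → ℝ :=
    fun i j => if j = p i then t (p i) else if j = p i - 1 then 1 - t (p i) else 0 with hlam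
  have hsubne : ∀ q : Fin m, q - 1 ≠ q := by
    intro q h
    exact hone (sub_eq_self.mp h)
  have haddne : ∀ q : Fin m, q + 1 ≠ q := by
    intro q h
    exact hone (add_eq_left.mp h)
  have hfilter : ∀ q : Fin m,
      (Finset.univ.filter (fun i => p i = q)) = (Finset.univ.filter (fun i => g i = σf q)) := by
    intro q
    apply Finset.filter_congr
    intro i _
    rw [hp]
    simp only
    rw [Equiv.symm_apply_eq]
    exact Iff.rfl
  have hFfib : ∀ q, F q = ∑ i ∈ Finset.univ.filter (fun i => p i = q), a i := by
    intro q
    rw [hF, hGf, hfilter q]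
  refine ⟨lam, ?_, ?_, ?_, ?_, ?_⟩
  · intro i j
    rw [hlam]
    simp only
    split_ifs
    · exact ⟨ht0 _, ht1 _⟩
    · constructor
      · have := ht1 (p i); linarith
      · have := ht0 (p i); linarith
    · exact ⟨le_rfl, zero_le_one⟩
  · intro i
    have hsplit : ∀ j, lam i j =
        (if j = p i then t (p i) else 0) + (if j = p i - 1 then 1 - t (p i) else 0) := by
      intro j
      rw [hlam]
      simp only
      by_cases h1 : j = p i
      · rw [if_pos h1, if_pos h1, if_neg (by rw [h1]; exact Ne.symm (hsubne (p i))), add_zero]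
      · rw [if_neg h1, if_neg h1, zero_add]
    rw [Finset.sum_congr rfl (fun j _ => hsplit j), Finset.sum_add_distrib]
    rw [Finset.sum_ite_eq' Finset.univ (p i) (fun _ => t (p i)),
      Finset.sum_ite_eq' Finset.univ (p i - 1) (fun _ => 1 - t (p i))]
    simp
  · intro i
    refine ⟨{p i, p i - 1}, ?_, ?_⟩
    · exact le_trans (Finset.card_insert_le _ _) (by simp)
    · intro j hj
      simp only [Finset.mem_insert, Finset.mem_singleton] at hj
      push_neg at hj
      rw [hlam]
      simp only
      rw [if_neg hj.1, if_neg hj.2]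
  · intro j
    have hptw : ∀ i, a i * lam i j =
        (if p i = j then a i * t j else 0) + (if p i = j + 1 then a i * (1 - t (j+1)) else 0) := by
      intro i
      rw [hlam]
      simp only
      by_cases h1 : j = p i
      · have h2 : ¬ (p i = j + 1) := by
          rw [← h1]
          exact Ne.symm (haddne j)
        rw [if_pos h1, if_pos h1.symm, if_neg h2, ← h1, add_zero]
      · by_cases h2 : p i = j + 1
        · have hj2 : j = p i - 1 := by
            rw [h2]
            exact (add_sub_cancel_right j 1).symm
          rw [if_neg h1, if_pos hj2, if_neg (fun h => h1 h.symm), if_pos h2, h2, zero_add]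
        · have hj3 : ¬ (j = p i - 1) := by
            intro h
            apply h2
            rw [h]
            exact (sub_add_cancel (p i) 1).symm ▸ rfl
          rw [if_neg h1, if_neg hj3, if_neg (fun h => h1 h.symm), if_neg h2, mul_zero, add_zero]
    rw [Finset.sum_congr rfl (fun i _ => hptw i), Finset.sum_add_distrib]
    rw [← Finset.sum_filter, ← Finset.sum_filter, ← Finset.sum_mul, ← Finset.sum_mul,
      ← hFfib j, ← hFfib (j+1)]
    have := hkey j
    linarith
  · refine ⟨fun q s => if s = 0 then t q else 1 - t (q + 1), ?_⟩
    intro i j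
    by_cases h1 : j = p i
    · right; left
      rw [hlam]
      simp [h1]
    · by_cases h2 : j = p i - 1
      · right; right
        have h3 : p i = j + 1 := by rw [h2]; exact ((sub_add_cancel (p i) 1).symm ▸ rfl)
        rw [hlam]
        simp only [if_neg h1, if_pos h2]
        rw [if_neg (by decide : (1:Fin 2) ≠ 0), h3]
      · left
        rw [hlam]
        simp only [if_neg h1, if_neg h2]
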